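/- Flip paths beget tetrations: let T_0, T_1, …, T_n be triangulations of the convex v-gon such that each T_{k+1} is obtained from T_k by a flip, the k-th flip replacing triangles {a_k,b_k,c_k} and {a_k,c_k,d_k} (with a_k < b_k < c_k < d_k) by {a_k,b_k,d_k} and {b_k,c_k,d_k}. Then the 3-chain τ := Σ_{k=0}^{n−1} (−[a_k, b_k, c_k, d_k]) satisfies ∂τ = σ_{T_0} − σ_{T_n} and ‖τ‖₁ ≤ n. Consequently, for every good volume potential ρ on {0,…,v−1}, n ≥ ρ(σ_{T_0}) − ρ(σ_{T_n}). -/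

import Mathlib

noncomputable section

/-- A *volume potential* on a vertex type `V` assigns a rational number to each
ordered triple of distinct vertices, with `ρ(A,B,C) = ρ(B,C,A) = -ρ(A,C,B)`. -/
structure VolumePotential (V : Type*) where
  ρ : V → V → V → ℚ
  cyclic : ∀ A B C : V, A ≠ B → A ≠ C → B ≠ C → ρ A B C = ρ B C A
  antisymm : ∀ A B C : V, A ≠ B → A ≠ C → B ≠ C → ρ A B C = -ρ A C B

variable {V : Type*} [DecidableEq V]

/-- The volume form of a volume potential:
`vol_ρ(A,B,C,D) = ρ(B,C,D) − ρ(A,C,D) + ρ(A,B,D) − ρ(A,B,C)`. -/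
def VolumePotential.vol (P : VolumePotential V) (A B C D : V) : ℚ :=
  P.ρ B C D - P.ρ A C D + P.ρ A B D - P.ρ A B C

/-- A volume potential is *good* if its volume form assigns every ordered
4-tuple of distinct vertices volume at most 1. -/
def VolumePotential.Good (P : VolumePotential V) : Prop :=
  ∀ A B C D : V, A ≠ B → A ≠ C → A ≠ D → B ≠ C → B ≠ D → C ≠ D →
    P.vol A B C D ≤ 1

/-- A 2-chain on `V`: a finitely supported alternating integer-valued function on
ordered triples (this encodes a finitely supported `ℤ`-linear combination of
oriented triangles, an oriented triangle being an ordered triple of distinct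
vertices up to even permutation, with orientation reversal acting as negation). -/
def IsChain2 (c : V → V → V → ℤ) : Prop :=
  (∀ A B C, c A B C = -c B A C) ∧ (∀ A B C, c A B C = -c A C B) ∧
  {t : V × V × V | c t.1 t.2.1 t.2.2 ≠ 0}.Finite

/-- A 3-chain on `V`: a finitely supported alternating integer-valued function on
ordered 4-tuples (a finitely supported `ℤ`-linear combination of oriented
tetrahedra). -/
def IsChain3 (c : V → V → V → V → ℤ) : Prop :=
  (∀ A B C D, c A B C D = -c B A C D) ∧ (∀ A B C D, c A B C D = -c A C B D) ∧
  (∀ A B C D, c A B C D = -c A B D C) ∧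
  {t : V × V × V × V | c t.1 t.2.1 t.2.2.1 t.2.2.2 ≠ 0}.Finite

/-- The boundary of a 2-chain, a 1-chain: `∂[A,B,C] = [B,C] − [A,C] + [A,B]`,
extended `ℤ`-linearly. -/
def bdry2 (c : V → V → V → ℤ) : V → V → ℤ := fun B C => ∑ᶠ A, c A B C

/-- The boundary of a 3-chain, a 2-chain:
`∂[A,B,C,D] = [B,C,D] − [A,C,D] + [A,B,D] − [A,B,C]`, extended `ℤ`-linearly. -/
def bdry3 (c : V → V → V → V → ℤ) : V → V → V → ℤ := fun B C D => ∑ᶠ A, c A B C D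

/-- The `ℤ`-linear extension of a volume potential to 2-chains.  (Each oriented
triangle of the chain occurs as 6 ordered triples, 3 with each sign, whence the
division by 6.) -/
def VolumePotential.eval2 (P : VolumePotential V) (c : V → V → V → ℤ) : ℚ :=
  (∑ᶠ t : V × V × V, (c t.1 t.2.1 t.2.2 : ℚ) * P.ρ t.1 t.2.1 t.2.2) / 6

/-- The `ℤ`-linear extension of the volume form to 3-chains. -/
def VolumePotential.eval3 (P : VolumePotential V) (c : V → V → V → V → ℤ) : ℚ :=
  (∑ᶠ t : V × V × V × V,
    (c t.1 t.2.1 t.2.2.1 t.2.2.2 : ℚ) * P.vol t.1 t.2.1 t.2.2.1 t.2.2.2) / 24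

/-- The ℓ¹-norm of a 3-chain: the sum of the absolute values of its coefficients. -/
def l1norm3 (c : V → V → V → V → ℤ) : ℚ :=
  (∑ᶠ t : V × V × V × V, (|c t.1 t.2.1 t.2.2.1 t.2.2.2| : ℚ)) / 24

/-! Convex polygon combinatorics: the vertices of a convex `v`-gon are labelled
`0, 1, …, v−1` (here `Fin v`) in counterclockwise cyclic order. -/

/-- `e` is a side of the convex `v`-gon: `{i, i+1}` or `{0, v−1}`. -/
def IsSide (v : ℕ) (e : Finset (Fin v)) : Prop :=
  ∃ i j : Fin v, e = {i, j} ∧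
    ((j : ℕ) = (i : ℕ) + 1 ∨ ((i : ℕ) = 0 ∧ (j : ℕ) = v - 1))

/-- `e` is a diagonal of the convex `v`-gon: a 2-element vertex set that is not
a side. -/
def IsDiag (v : ℕ) (e : Finset (Fin v)) : Prop :=
  e.card = 2 ∧ ¬ IsSide v e

/-- Two diagonals `{a,c}` and `{b,d}` cross when `a < b < c < d`. -/
def Crossing {v : ℕ} (e f : Finset (Fin v)) : Prop :=
  ∃ a b c d : Fin v, a < b ∧ b < c ∧ c < d ∧
    ((e = {a, c} ∧ f = {b, d}) ∨ (e = {b, d} ∧ f = {a, c}))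

/-- `D` is a maximal set of pairwise non-crossing diagonals of the `v`-gon. -/
def IsMaxNoncrossing (v : ℕ) (D : Finset (Finset (Fin v))) : Prop :=
  (∀ e ∈ D, IsDiag v e) ∧ (∀ e ∈ D, ∀ f ∈ D, ¬ Crossing e f) ∧
  (∀ e, IsDiag v e → e ∉ D → ∃ f ∈ D, Crossing e f)

/-- An edge of the subdivided polygon: a side or a chosen diagonal. -/
def IsPolyEdge (v : ℕ) (D : Finset (Finset (Fin v))) (e : Finset (Fin v)) : Prop :=
  e ∈ D ∨ IsSide v e

/-- A *triangulation of the convex `v`-gon*: a set of `v − 2` triangles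
(3-element vertex subsets) that tile the polygon, i.e. the set of triangles cut
out by a maximal set `D` of pairwise non-crossing diagonals (for vertices in
convex position these are exactly the triangles all three of whose edges are
sides or diagonals of `D`). -/
def IsPolygonTriangulation (v : ℕ) (T : Finset (Finset (Fin v))) : Prop :=
  T.card = v - 2 ∧
  ∃ D : Finset (Finset (Fin v)), IsMaxNoncrossing v D ∧
    ∀ t, t ∈ T ↔ ∃ x y z : Fin v, x < y ∧ y < z ∧ t = {x, y, z} ∧
      IsPolyEdge v D {x, y} ∧ IsPolyEdge v D {y, z} ∧ IsPolyEdge v D {x, z}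

/-- The alternating indicator of the counterclockwise orientation of the
triangle with vertex set `t`: the triangle `a < b < c` is oriented as `[a,b,c]`,
so an ordered triple `(X,Y,Z)` of distinct vertices with `{X,Y,Z} = t` gets the
sign of the permutation sorting it. -/
def sortedTriChain {v : ℕ} (t : Finset (Fin v)) (X Y Z : Fin v) : ℤ :=
  if ({X, Y, Z} : Finset (Fin v)) = t ∧ X ≠ Y ∧ X ≠ Z ∧ Y ≠ Z then
    (if X < Y then 1 else -1) * (if X < Z then 1 else -1) * (if Y < Z then 1 else -1)
  else 0

/-- The 2-chain `σ_T` of a polygon triangulation `T`: coefficient `+1` on each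
triangle of `T`, oriented counterclockwise. -/
def polyChain {v : ℕ} (T : Finset (Finset (Fin v))) : Fin v → Fin v → Fin v → ℤ :=
  fun X Y Z => ∑ t ∈ T, sortedTriChain t X Y Z

/-- The alternating indicator of the oriented tetrahedron `[a,b,c,d]` where
`a < b < c < d`: an ordered 4-tuple of distinct vertices with vertex set
`{a,b,c,d}` gets the sign of the permutation sorting it. -/
def sortedTetChain {v : ℕ} (a b c d X Y Z W : Fin v) : ℤ :=
  if ({X, Y, Z, W} : Finset (Fin v)) = ({a, b, c, d} : Finset (Fin v)) ∧
      X ≠ Y ∧ X ≠ Z ∧ X ≠ W ∧ Y ≠ Z ∧ Y ≠ W ∧ Z ≠ W then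
    (if X < Y then 1 else -1) * (if X < Z then 1 else -1) * (if X < W then 1 else -1) *
    (if Y < Z then 1 else -1) * (if Y < W then 1 else -1) * (if Z < W then 1 else -1)
  else 0

section Aux
variable {α : Type*} [DecidableEq α]

theorem insert_cancel (a : α) (S T : Finset α) (h : a ∉ S) (h2 : a ∉ T)
    (heq : insert a S = insert a T) : S = T := by
  ext x
  have h3 := Finset.ext_iff.1 heq x
  simp only [Finset.mem_insert] at h3
  constructor
  · intro hx
    rcases h3.1 (Or.inr hx) with rfl | hh
    · exact absurd hx h
    · exact hh
  · intro hx
    rcases h3.2 (Or.inr hx) with rfl | hh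
    · exact absurd hx h2
    · exact hh

set_option maxHeartbeats 1000000 in
theorem triple_cases {X Y Z p q r : α} (h : ({X, Y, Z} : Finset α) = {p, q, r})
    (hXY : X ≠ Y) (hXZ : X ≠ Z) (hYZ : Y ≠ Z) :
    (X = p ∧ Y = q ∧ Z = r) ∨ (X = p ∧ Y = r ∧ Z = q) ∨ (X = q ∧ Y = p ∧ Z = r) ∨
    (X = q ∧ Y = r ∧ Z = p) ∨ (X = r ∧ Y = p ∧ Z = q) ∨ (X = r ∧ Y = q ∧ Z = p) := by
  have hX : X = p ∨ X = q ∨ X = r := by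
    have hm : X ∈ ({X, Y, Z} : Finset α) := by simp
    rw [h] at hm; simpa using hm
  have hY : Y = p ∨ Y = q ∨ Y = r := by
    have hm : Y ∈ ({X, Y, Z} : Finset α) := by simp
    rw [h] at hm; simpa using hm
  have hZ : Z = p ∨ Z = q ∨ Z = r := by
    have hm : Z ∈ ({X, Y, Z} : Finset α) := by simp
    rw [h] at hm; simpa using hm
  clear h
  rcases hX with rfl | rfl | rfl <;> rcases hY with rfl | rfl | rfl <;>
    rcases hZ with rfl | rfl | rfl <;> tauto

end Aux
set_option maxHeartbeats 1000000 in
theorem tet_eval_a {v : ℕ} {a b c d : Fin v} (hab : a < b) (hbc : b < c) (hcd : c < d)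
    (X Y Z : Fin v) :
    sortedTetChain a b c d a X Y Z =  sortedTriChain {b, c, d} X Y Z := by
  have hac := hab.trans hbc
  have hbd := hbc.trans hcd
  have had := hab.trans hbd
  by_cases h6 : ({X, Y, Z} : Finset (Fin v)) = {b, c, d} ∧ X ≠ Y ∧ X ≠ Z ∧ Y ≠ Z
  · obtain ⟨hset, hXY, hXZ, hYZ⟩ := h6
    have q1 : ({a,b,c,d} : Finset (Fin v)) = {a,b,c,d} := by ext x; simp; try tauto
    have r1 : ({b,c,d} : Finset (Fin v)) = {b,c,d} := by ext x; simp; try tauto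
    have q2 : ({a,b,d,c} : Finset (Fin v)) = {a,b,c,d} := by ext x; simp; try tauto
    have r2 : ({b,d,c} : Finset (Fin v)) = {b,c,d} := by ext x; simp; try tauto
    have q3 : ({a,c,b,d} : Finset (Fin v)) = {a,b,c,d} := by ext x; simp; try tauto
    have r3 : ({c,b,d} : Finset (Fin v)) = {b,c,d} := by ext x; simp; try tauto
    have q4 : ({a,c,d,b} : Finset (Fin v)) = {a,b,c,d} := by ext x; simp; try tauto
    have r4 : ({c,d,b} : Finset (Fin v)) = {b,c,d} := by ext x; simp; try tauto
    have q5 : ({a,d,b,c} : Finset (Fin v)) = {a,b,c,d} := by ext x; simp; try tauto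
    have r5 : ({d,b,c} : Finset (Fin v)) = {b,c,d} := by ext x; simp; try tauto
    have q6 : ({a,d,c,b} : Finset (Fin v)) = {a,b,c,d} := by ext x; simp; try tauto
    have r6 : ({d,c,b} : Finset (Fin v)) = {b,c,d} := by ext x; simp; try tauto
    rcases triple_cases hset hXY hXZ hYZ with ⟨rfl,rfl,rfl⟩|⟨rfl,rfl,rfl⟩|⟨rfl,rfl,rfl⟩|⟨rfl,rfl,rfl⟩|⟨rfl,rfl,rfl⟩|⟨rfl,rfl,rfl⟩ <;>
      simp [sortedTetChain, sortedTriChain, q1, r1, q2, r2, q3, r3, q4, r4, q5, r5, q6, r6, hab, hbc, hcd, hac, hbd, had,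
        hab.ne, hab.ne', hbc.ne, hbc.ne', hcd.ne, hcd.ne', hac.ne, hac.ne', hbd.ne, hbd.ne',
        had.ne, had.ne', hab.asymm, hbc.asymm, hcd.asymm, hac.asymm, hbd.asymm, had.asymm]
  · have hz : sortedTriChain ({b,c,d} : Finset (Fin v)) X Y Z = 0 := by
      rw [sortedTriChain, if_neg h6]
    have hcc : sortedTetChain a b c d a X Y Z = 0 := by
      rw [sortedTetChain, if_neg]
      rintro ⟨hq, hpX, hpY, hpZ, hXY, hXZ, hYZ⟩
      refine h6 ⟨?_, hXY, hXZ, hYZ⟩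
      have hrw : ({a,b,c,d} : Finset (Fin v)) = insert a {b,c,d} := by
        ext x; simp; try tauto
      refine insert_cancel a _ _ ?_ ?_ (by rw [← hrw]; exact hq)
      · simp [hpX, hpY, hpZ]
      · simp [hab.ne, hac.ne, had.ne]
    rw [hz, hcc]; try ring

set_option maxHeartbeats 1000000 in
theorem tet_eval_b {v : ℕ} {a b c d : Fin v} (hab : a < b) (hbc : b < c) (hcd : c < d)
    (X Y Z : Fin v) :
    sortedTetChain a b c d b X Y Z = - sortedTriChain {a, c, d} X Y Z := by
  have hac := hab.trans hbc
  have hbd := hbc.trans hcd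
  have had := hab.trans hbd
  by_cases h6 : ({X, Y, Z} : Finset (Fin v)) = {a, c, d} ∧ X ≠ Y ∧ X ≠ Z ∧ Y ≠ Z
  · obtain ⟨hset, hXY, hXZ, hYZ⟩ := h6
    have q1 : ({b,a,c,d} : Finset (Fin v)) = {a,b,c,d} := by ext x; simp; try tauto
    have r1 : ({a,c,d} : Finset (Fin v)) = {a,c,d} := by ext x; simp; try tauto
    have q2 : ({b,a,d,c} : Finset (Fin v)) = {a,b,c,d} := by ext x; simp; try tauto
    have r2 : ({a,d,c} : Finset (Fin v)) = {a,c,d} := by ext x; simp; try tauto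
    have q3 : ({b,c,a,d} : Finset (Fin v)) = {a,b,c,d} := by ext x; simp; try tauto
    have r3 : ({c,a,d} : Finset (Fin v)) = {a,c,d} := by ext x; simp; try tauto
    have q4 : ({b,c,d,a} : Finset (Fin v)) = {a,b,c,d} := by ext x; simp; try tauto
    have r4 : ({c,d,a} : Finset (Fin v)) = {a,c,d} := by ext x; simp; try tauto
    have q5 : ({b,d,a,c} : Finset (Fin v)) = {a,b,c,d} := by ext x; simp; try tauto
    have r5 : ({d,a,c} : Finset (Fin v)) = {a,c,d} := by ext x; simp; try tauto
    have q6 : ({b,d,c,a} : Finset (Fin v)) = {a,b,c,d} := by ext x; simp; try tauto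
    have r6 : ({d,c,a} : Finset (Fin v)) = {a,c,d} := by ext x; simp; try tauto
    rcases triple_cases hset hXY hXZ hYZ with ⟨rfl,rfl,rfl⟩|⟨rfl,rfl,rfl⟩|⟨rfl,rfl,rfl⟩|⟨rfl,rfl,rfl⟩|⟨rfl,rfl,rfl⟩|⟨rfl,rfl,rfl⟩ <;>
      simp [sortedTetChain, sortedTriChain, q1, r1, q2, r2, q3, r3, q4, r4, q5, r5, q6, r6, hab, hbc, hcd, hac, hbd, had,
        hab.ne, hab.ne', hbc.ne, hbc.ne', hcd.ne, hcd.ne', hac.ne, hac.ne', hbd.ne, hbd.ne',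
        had.ne, had.ne', hab.asymm, hbc.asymm, hcd.asymm, hac.asymm, hbd.asymm, had.asymm]
  · have hz : sortedTriChain ({a,c,d} : Finset (Fin v)) X Y Z = 0 := by
      rw [sortedTriChain, if_neg h6]
    have hcc : sortedTetChain a b c d b X Y Z = 0 := by
      rw [sortedTetChain, if_neg]
      rintro ⟨hq, hpX, hpY, hpZ, hXY, hXZ, hYZ⟩
      refine h6 ⟨?_, hXY, hXZ, hYZ⟩
      have hrw : ({a,b,c,d} : Finset (Fin v)) = insert b {a,c,d} := by
        ext x; simp; try tauto
      refine insert_cancel b _ _ ?_ ?_ (by rw [← hrw]; exact hq)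
      · simp [hpX, hpY, hpZ]
      · simp [hab.ne', hbc.ne, hbd.ne]
    rw [hz, hcc]; try ring

set_option maxHeartbeats 1000000 in
theorem tet_eval_c {v : ℕ} {a b c d : Fin v} (hab : a < b) (hbc : b < c) (hcd : c < d)
    (X Y Z : Fin v) :
    sortedTetChain a b c d c X Y Z =  sortedTriChain {a, b, d} X Y Z := by
  have hac := hab.trans hbc
  have hbd := hbc.trans hcd
  have had := hab.trans hbd
  by_cases h6 : ({X, Y, Z} : Finset (Fin v)) = {a, b, d} ∧ X ≠ Y ∧ X ≠ Z ∧ Y ≠ Z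
  · obtain ⟨hset, hXY, hXZ, hYZ⟩ := h6
    have q1 : ({c,a,b,d} : Finset (Fin v)) = {a,b,c,d} := by ext x; simp; try tauto
    have r1 : ({a,b,d} : Finset (Fin v)) = {a,b,d} := by ext x; simp; try tauto
    have q2 : ({c,a,d,b} : Finset (Fin v)) = {a,b,c,d} := by ext x; simp; try tauto
    have r2 : ({a,d,b} : Finset (Fin v)) = {a,b,d} := by ext x; simp; try tauto
    have q3 : ({c,b,a,d} : Finset (Fin v)) = {a,b,c,d} := by ext x; simp; try tauto
    have r3 : ({b,a,d} : Finset (Fin v)) = {a,b,d} := by ext x; simp; try tauto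
    have q4 : ({c,b,d,a} : Finset (Fin v)) = {a,b,c,d} := by ext x; simp; try tauto
    have r4 : ({b,d,a} : Finset (Fin v)) = {a,b,d} := by ext x; simp; try tauto
    have q5 : ({c,d,a,b} : Finset (Fin v)) = {a,b,c,d} := by ext x; simp; try tauto
    have r5 : ({d,a,b} : Finset (Fin v)) = {a,b,d} := by ext x; simp; try tauto
    have q6 : ({c,d,b,a} : Finset (Fin v)) = {a,b,c,d} := by ext x; simp; try tauto
    have r6 : ({d,b,a} : Finset (Fin v)) = {a,b,d} := by ext x; simp; try tauto
    rcases triple_cases hset hXY hXZ hYZ with ⟨rfl,rfl,rfl⟩|⟨rfl,rfl,rfl⟩|⟨rfl,rfl,rfl⟩|⟨rfl,rfl,rfl⟩|⟨rfl,rfl,rfl⟩|⟨rfl,rfl,rfl⟩ <;>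
      simp [sortedTetChain, sortedTriChain, q1, r1, q2, r2, q3, r3, q4, r4, q5, r5, q6, r6, hab, hbc, hcd, hac, hbd, had,
        hab.ne, hab.ne', hbc.ne, hbc.ne', hcd.ne, hcd.ne', hac.ne, hac.ne', hbd.ne, hbd.ne',
        had.ne, had.ne', hab.asymm, hbc.asymm, hcd.asymm, hac.asymm, hbd.asymm, had.asymm]
  · have hz : sortedTriChain ({a,b,d} : Finset (Fin v)) X Y Z = 0 := by
      rw [sortedTriChain, if_neg h6]
    have hcc : sortedTetChain a b c d c X Y Z = 0 := by
      rw [sortedTetChain, if_neg]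
      rintro ⟨hq, hpX, hpY, hpZ, hXY, hXZ, hYZ⟩
      refine h6 ⟨?_, hXY, hXZ, hYZ⟩
      have hrw : ({a,b,c,d} : Finset (Fin v)) = insert c {a,b,d} := by
        ext x; simp; try tauto
      refine insert_cancel c _ _ ?_ ?_ (by rw [← hrw]; exact hq)
      · simp [hpX, hpY, hpZ]
      · simp [hac.ne', hbc.ne', hcd.ne]
    rw [hz, hcc]; try ring

set_option maxHeartbeats 1000000 in
theorem tet_eval_d {v : ℕ} {a b c d : Fin v} (hab : a < b) (hbc : b < c) (hcd : c < d)
    (X Y Z : Fin v) :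
    sortedTetChain a b c d d X Y Z = - sortedTriChain {a, b, c} X Y Z := by
  have hac := hab.trans hbc
  have hbd := hbc.trans hcd
  have had := hab.trans hbd
  by_cases h6 : ({X, Y, Z} : Finset (Fin v)) = {a, b, c} ∧ X ≠ Y ∧ X ≠ Z ∧ Y ≠ Z
  · obtain ⟨hset, hXY, hXZ, hYZ⟩ := h6
    have q1 : ({d,a,b,c} : Finset (Fin v)) = {a,b,c,d} := by ext x; simp; try tauto
    have r1 : ({a,b,c} : Finset (Fin v)) = {a,b,c} := by ext x; simp; try tauto
    have q2 : ({d,a,c,b} : Finset (Fin v)) = {a,b,c,d} := by ext x; simp; try tauto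
    have r2 : ({a,c,b} : Finset (Fin v)) = {a,b,c} := by ext x; simp; try tauto
    have q3 : ({d,b,a,c} : Finset (Fin v)) = {a,b,c,d} := by ext x; simp; try tauto
    have r3 : ({b,a,c} : Finset (Fin v)) = {a,b,c} := by ext x; simp; try tauto
    have q4 : ({d,b,c,a} : Finset (Fin v)) = {a,b,c,d} := by ext x; simp; try tauto
    have r4 : ({b,c,a} : Finset (Fin v)) = {a,b,c} := by ext x; simp; try tauto
    have q5 : ({d,c,a,b} : Finset (Fin v)) = {a,b,c,d} := by ext x; simp; try tauto
    have r5 : ({c,a,b} : Finset (Fin v)) = {a,b,c} := by ext x; simp; try tauto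
    have q6 : ({d,c,b,a} : Finset (Fin v)) = {a,b,c,d} := by ext x; simp; try tauto
    have r6 : ({c,b,a} : Finset (Fin v)) = {a,b,c} := by ext x; simp; try tauto
    rcases triple_cases hset hXY hXZ hYZ with ⟨rfl,rfl,rfl⟩|⟨rfl,rfl,rfl⟩|⟨rfl,rfl,rfl⟩|⟨rfl,rfl,rfl⟩|⟨rfl,rfl,rfl⟩|⟨rfl,rfl,rfl⟩ <;>
      simp [sortedTetChain, sortedTriChain, q1, r1, q2, r2, q3, r3, q4, r4, q5, r5, q6, r6, hab, hbc, hcd, hac, hbd, had,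
        hab.ne, hab.ne', hbc.ne, hbc.ne', hcd.ne, hcd.ne', hac.ne, hac.ne', hbd.ne, hbd.ne',
        had.ne, had.ne', hab.asymm, hbc.asymm, hcd.asymm, hac.asymm, hbd.asymm, had.asymm]
  · have hz : sortedTriChain ({a,b,c} : Finset (Fin v)) X Y Z = 0 := by
      rw [sortedTriChain, if_neg h6]
    have hcc : sortedTetChain a b c d d X Y Z = 0 := by
      rw [sortedTetChain, if_neg]
      rintro ⟨hq, hpX, hpY, hpZ, hXY, hXZ, hYZ⟩
      refine h6 ⟨?_, hXY, hXZ, hYZ⟩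
      have hrw : ({a,b,c,d} : Finset (Fin v)) = insert d {a,b,c} := by
        ext x; simp; try tauto
      refine insert_cancel d _ _ ?_ ?_ (by rw [← hrw]; exact hq)
      · simp [hpX, hpY, hpZ]
      · simp [had.ne', hbd.ne', hcd.ne']
    rw [hz, hcc]; try ring
theorem tet_bdry {v : ℕ} {a b c d : Fin v} (hab : a < b) (hbc : b < c) (hcd : c < d)
    (X Y Z : Fin v) :
    ∑ A : Fin v, sortedTetChain a b c d A X Y Z
      = sortedTriChain {b, c, d} X Y Z - sortedTriChain {a, c, d} X Y Z
        + sortedTriChain {a, b, d} X Y Z - sortedTriChain {a, b, c} X Y Z := by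
  have hac := hab.trans hbc
  have hbd := hbc.trans hcd
  have had := hab.trans hbd
  have hsub : ∑ A ∈ ({a, b, c, d} : Finset (Fin v)), sortedTetChain a b c d A X Y Z
      = ∑ A : Fin v, sortedTetChain a b c d A X Y Z := by
    refine Finset.sum_subset (Finset.subset_univ _) ?_
    intro A _ hA
    rw [sortedTetChain, if_neg]
    rintro ⟨hq, -⟩
    exact hA (by rw [← hq]; simp)
  rw [← hsub,
    Finset.sum_insert (by simp [hab.ne, hac.ne, had.ne]),
    Finset.sum_insert (by simp [hbc.ne, hbd.ne]),
    Finset.sum_insert (by simp [hcd.ne]),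
    Finset.sum_singleton,
    tet_eval_a hab hbc hcd, tet_eval_b hab hbc hcd, tet_eval_c hab hbc hcd,
    tet_eval_d hab hbc hcd]
  ring
theorem triple_pin {v : ℕ} {x y z p q r : Fin v} (h : ({x, y, z} : Finset (Fin v)) = {p, q, r})
    (hxy : x < y) (hyz : y < z) (hpq : p < q) (hqr : q < r) : x = p ∧ y = q ∧ z = r := by
  have hxz := hxy.trans hyz
  rcases triple_cases h hxy.ne hxz.ne hyz.ne with
    ⟨rfl,rfl,rfl⟩|⟨rfl,rfl,rfl⟩|⟨rfl,rfl,rfl⟩|⟨rfl,rfl,rfl⟩|⟨rfl,rfl,rfl⟩|⟨rfl,rfl,rfl⟩ <;>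
    first
      | exact ⟨rfl, rfl, rfl⟩
      | (exfalso; simp only [Fin.lt_def] at hxy hyz hpq hqr; omega)

theorem not_side_ac {v : ℕ} {a b c d : Fin v} (hab : a < b) (hbc : b < c) (hcd : c < d) :
    ¬ IsSide v {a, c} := by
  rintro ⟨i, j, hij, hcase⟩
  have h1 : a = i ∨ a = j := by
    have : a ∈ ({i, j} : Finset (Fin v)) := by rw [← hij]; simp
    simpa using this
  have h2 : c = i ∨ c = j := by
    have : c ∈ ({i, j} : Finset (Fin v)) := by rw [← hij]; simp
    simpa using this
  have hd := d.isLt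
  simp only [Fin.lt_def] at hab hbc hcd
  simp only [Fin.ext_iff] at h1 h2
  omega

theorem not_side_bd {v : ℕ} {a b c d : Fin v} (hab : a < b) (hbc : b < c) (hcd : c < d) :
    ¬ IsSide v {b, d} := by
  rintro ⟨i, j, hij, hcase⟩
  have h1 : b = i ∨ b = j := by
    have : b ∈ ({i, j} : Finset (Fin v)) := by rw [← hij]; simp
    simpa using this
  have h2 : d = i ∨ d = j := by
    have : d ∈ ({i, j} : Finset (Fin v)) := by rw [← hij]; simp
    simpa using this
  have hd := d.isLt
  simp only [Fin.lt_def] at hab hbc hcd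
  simp only [Fin.ext_iff] at h1 h2
  omega

theorem flip_notmem {v : ℕ} {a b c d : Fin v} {Tk : Finset (Finset (Fin v))}
    (hTk : IsPolygonTriangulation v Tk) (hab : a < b) (hbc : b < c) (hcd : c < d)
    (habc : ({a, b, c} : Finset (Fin v)) ∈ Tk) (hacd : ({a, c, d} : Finset (Fin v)) ∈ Tk) :
    ({a, b, d} : Finset (Fin v)) ∉ Tk ∧ ({b, c, d} : Finset (Fin v)) ∉ Tk := by
  obtain ⟨-, D, hD, hmem⟩ := hTk
  have hac := hab.trans hbc
  have hbd := hbc.trans hcd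
  have had := hab.trans hbd
  have hacE : ({a, c} : Finset (Fin v)) ∈ D := by
    obtain ⟨x, y, z, hxy, hyz, hteq, -, -, hxz⟩ := (hmem _).1 habc
    obtain ⟨rfl, rfl, rfl⟩ := triple_pin hteq.symm hxy hyz hab hbc
    rcases hxz with hmemD | hside
    · exact hmemD
    · exact absurd hside (not_side_ac hab hbc hcd)
  have hbdE : ¬ IsPolyEdge v D {b, d} := by
    rintro (hmemD | hside)
    · exact hD.2.1 _ hacE _ hmemD ⟨a, b, c, d, hab, hbc, hcd, Or.inl ⟨rfl, rfl⟩⟩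
    · exact not_side_bd hab hbc hcd hside
  constructor
  · intro hmem2
    obtain ⟨x, y, z, hxy, hyz, hteq, -, hyzE, -⟩ := (hmem _).1 hmem2
    obtain ⟨rfl, rfl, rfl⟩ := triple_pin hteq.symm hxy hyz hab hbd
    exact hbdE hyzE
  · intro hmem2
    obtain ⟨x, y, z, hxy, hyz, hteq, -, -, hxzE⟩ := (hmem _).1 hmem2
    obtain ⟨rfl, rfl, rfl⟩ := triple_pin hteq.symm hxy hyz hbc hcd
    exact hbdE hxzE

theorem flip_chain {v : ℕ} {a b c d : Fin v} {Tk Tk1 : Finset (Finset (Fin v))}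
    (hTk : IsPolygonTriangulation v Tk) (hab : a < b) (hbc : b < c) (hcd : c < d)
    (habc : ({a, b, c} : Finset (Fin v)) ∈ Tk) (hacd : ({a, c, d} : Finset (Fin v)) ∈ Tk)
    (hT1 : Tk1 = (Tk \ {({a, b, c} : Finset (Fin v)), {a, c, d}}) ∪
        {({a, b, d} : Finset (Fin v)), {b, c, d}})
    (X Y Z : Fin v) :
    polyChain Tk1 X Y Z - polyChain Tk X Y Z
      = sortedTriChain {b, c, d} X Y Z - sortedTriChain {a, c, d} X Y Z
        + sortedTriChain {a, b, d} X Y Z - sortedTriChain {a, b, c} X Y Z := by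
  obtain ⟨habd_n, hbcd_n⟩ := flip_notmem hTk hab hbc hcd habc hacd
  have hac := hab.trans hbc
  have hbd := hbc.trans hcd
  have had := hab.trans hbd
  have hne1 : ({a, b, c} : Finset (Fin v)) ≠ {a, c, d} := by
    intro h
    have hd2 : d ∈ ({a, b, c} : Finset (Fin v)) := by rw [h]; simp
    simp [had.ne', hbd.ne', hcd.ne'] at hd2
  have hne2 : ({a, b, d} : Finset (Fin v)) ≠ {b, c, d} := by
    intro h
    have ha2 : a ∈ ({b, c, d} : Finset (Fin v)) := by rw [← h]; simp
    simp [hab.ne, hac.ne, had.ne] at ha2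
  have hdisj : Disjoint (Tk \ {({a, b, c} : Finset (Fin v)), {a, c, d}})
      {({a, b, d} : Finset (Fin v)), {b, c, d}} := by
    rw [Finset.disjoint_right]
    intro t ht hts
    simp only [Finset.mem_insert, Finset.mem_singleton] at ht
    rcases ht with rfl | rfl
    · exact habd_n (Finset.mem_sdiff.1 hts).1
    · exact hbcd_n (Finset.mem_sdiff.1 hts).1
  have hsubset : ({({a, b, c} : Finset (Fin v)), {a, c, d}} : Finset (Finset (Fin v))) ⊆ Tk := by
    intro t ht
    simp only [Finset.mem_insert, Finset.mem_singleton] at ht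
    rcases ht with rfl | rfl
    exacts [habc, hacd]
  rw [hT1, polyChain, polyChain, Finset.sum_union hdisj,
    Finset.sum_sdiff_eq_sub hsubset, Finset.sum_pair hne1, Finset.sum_pair hne2]
  ring
theorem part1 (v n : ℕ) (T : ℕ → Finset (Finset (Fin v))) (a b c d : ℕ → Fin v)
    (hT : ∀ k ≤ n, IsPolygonTriangulation v (T k))
    (hflip : ∀ k < n,
      a k < b k ∧ b k < c k ∧ c k < d k ∧
      ({a k, b k, c k} : Finset (Fin v)) ∈ T k ∧
      ({a k, c k, d k} : Finset (Fin v)) ∈ T k ∧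
      T (k + 1) =
        (T k \ {({a k, b k, c k} : Finset (Fin v)), {a k, c k, d k}}) ∪
          {({a k, b k, d k} : Finset (Fin v)), {b k, c k, d k}}) :
    (bdry3 (fun X Y Z W =>
        ∑ k ∈ Finset.range n, -sortedTetChain (a k) (b k) (c k) (d k) X Y Z W) =
      fun X Y Z => polyChain (T 0) X Y Z - polyChain (T n) X Y Z) := by
  funext X Y Z
  show ∑ᶠ A, _ = _
  rw [finsum_eq_sum_of_fintype, Finset.sum_comm]
  have key : ∀ k ∈ Finset.range n,
      (∑ A : Fin v, -sortedTetChain (a k) (b k) (c k) (d k) A X Y Z)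
        = polyChain (T k) X Y Z - polyChain (T (k + 1)) X Y Z := by
    intro k hk
    rw [Finset.mem_range] at hk
    obtain ⟨h1, h2, h3, h4, h5, h6⟩ := hflip k hk
    rw [Finset.sum_neg_distrib, tet_bdry h1 h2 h3]
    have h7 := flip_chain (hT k hk.le) h1 h2 h3 h4 h5 h6 X Y Z
    linarith
  rw [Finset.sum_congr rfl key]
  exact Finset.sum_range_sub' (fun k => polyChain (T k) X Y Z) n

theorem tet_l1 {v : ℕ} {a b c d : Fin v} (hab : a < b) (hbc : b < c) (hcd : c < d) :
    ∑ t : Fin v × Fin v × Fin v × Fin v,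
      (|sortedTetChain a b c d t.1 t.2.1 t.2.2.1 t.2.2.2| : ℚ) ≤ 24 := by
  classical
  have hac := hab.trans hbc
  have hbd := hbc.trans hcd
  have had := hab.trans hbd
  set g : Fin 4 → Fin v := ![a, b, c, d] with hg
  set Q : Finset (Fin 4 × Fin 4 × Fin 4 × Fin 4) := Finset.univ.filter
    (fun q => q.1 ≠ q.2.1 ∧ q.1 ≠ q.2.2.1 ∧ q.1 ≠ q.2.2.2 ∧ q.2.1 ≠ q.2.2.1 ∧
      q.2.1 ≠ q.2.2.2 ∧ q.2.2.1 ≠ q.2.2.2) with hQ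
  have hQcard : Q.card = 24 := by rw [hQ]; decide
  have hpoint : ∀ t : Fin v × Fin v × Fin v × Fin v,
      (|sortedTetChain a b c d t.1 t.2.1 t.2.2.1 t.2.2.2| : ℚ)
        ≤ ∑ q ∈ Q, (if t = (g q.1, g q.2.1, g q.2.2.1, g q.2.2.2) then (1:ℚ) else 0) := by
    rintro ⟨X, Y, Z, W⟩
    by_cases h : sortedTetChain a b c d X Y Z W = 0
    · rw [h]
      simp only [abs_zero, Int.cast_zero]
      refine Finset.sum_nonneg fun q _ => ?_
      split <;> norm_num
    · have hcond : ({X, Y, Z, W} : Finset (Fin v)) = {a, b, c, d} ∧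
          X ≠ Y ∧ X ≠ Z ∧ X ≠ W ∧ Y ≠ Z ∧ Y ≠ W ∧ Z ≠ W := by
        by_contra hc
        rw [sortedTetChain, if_neg hc] at h
        exact h rfl
      have habs : (|sortedTetChain a b c d X Y Z W| : ℚ) ≤ 1 := by
        have h1 : |sortedTetChain a b c d X Y Z W| ≤ (1:ℤ) := by
          rw [sortedTetChain, if_pos hcond]
          have he : ∀ (p : Prop) (inst : Decidable p), |(if p then (1:ℤ) else -1)| = 1 := by
            intros p inst; split <;> norm_num
          rw [abs_mul, abs_mul, abs_mul, abs_mul, abs_mul, he, he, he, he, he, he]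
          norm_num
        exact_mod_cast h1
      obtain ⟨hset, hXY, hXZ, hXW, hYZ, hYW, hZW⟩ := hcond
      have hmem : ∀ x : Fin v, x ∈ ({a, b, c, d} : Finset (Fin v)) → ∃ i : Fin 4, g i = x := by
        intro x hx
        simp only [Finset.mem_insert, Finset.mem_singleton] at hx
        rcases hx with rfl | rfl | rfl | rfl
        exacts [⟨0, rfl⟩, ⟨1, rfl⟩, ⟨2, rfl⟩, ⟨3, rfl⟩]
      obtain ⟨i, hi⟩ := hmem X (by rw [← hset]; simp)
      obtain ⟨j, hj⟩ := hmem Y (by rw [← hset]; simp)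
      obtain ⟨k, hk⟩ := hmem Z (by rw [← hset]; simp)
      obtain ⟨l, hl⟩ := hmem W (by rw [← hset]; simp)
      have hq : (i, j, k, l) ∈ Q := by
        rw [hQ]
        simp only [Finset.mem_filter, Finset.mem_univ, true_and]
        refine ⟨fun he => hXY ?_, fun he => hXZ ?_, fun he => hXW ?_,
          fun he => hYZ ?_, fun he => hYW ?_, fun he => hZW ?_⟩ <;>
          simp_all
      calc (|sortedTetChain a b c d X Y Z W| : ℚ) ≤ 1 := habs
        _ = (if ((X, Y, Z, W) : Fin v × Fin v × Fin v × Fin v)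
              = (g (i,j,k,l).1, g (i,j,k,l).2.1, g (i,j,k,l).2.2.1, g (i,j,k,l).2.2.2)
            then (1:ℚ) else 0) := by rw [if_pos (by rw [hi, hj, hk, hl])]
        _ ≤ ∑ q ∈ Q, (if ((X, Y, Z, W) : Fin v × Fin v × Fin v × Fin v)
              = (g q.1, g q.2.1, g q.2.2.1, g q.2.2.2) then (1:ℚ) else 0) := by
            refine Finset.single_le_sum
              (f := fun q : Fin 4 × Fin 4 × Fin 4 × Fin 4 =>
                (if ((X, Y, Z, W) : Fin v × Fin v × Fin v × Fin v)
                    = (g q.1, g q.2.1, g q.2.2.1, g q.2.2.2) then (1:ℚ) else 0))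
              (fun q _ => ?_) hq
            split <;> norm_num
  calc ∑ t : Fin v × Fin v × Fin v × Fin v,
        (|sortedTetChain a b c d t.1 t.2.1 t.2.2.1 t.2.2.2| : ℚ)
      ≤ ∑ t : Fin v × Fin v × Fin v × Fin v, ∑ q ∈ Q,
          (if t = (g q.1, g q.2.1, g q.2.2.1, g q.2.2.2) then (1:ℚ) else 0) :=
        Finset.sum_le_sum fun t _ => hpoint t
    _ = ∑ q ∈ Q, ∑ t : Fin v × Fin v × Fin v × Fin v,
          (if t = (g q.1, g q.2.1, g q.2.2.1, g q.2.2.2) then (1:ℚ) else 0) :=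
        Finset.sum_comm
    _ = ∑ q ∈ Q, (1:ℚ) := Finset.sum_congr rfl fun q _ => by simp
    _ = 24 := by rw [Finset.sum_const, hQcard]; norm_num
theorem part2 (v n : ℕ) (a b c d : ℕ → Fin v)
    (hord : ∀ k < n, a k < b k ∧ b k < c k ∧ c k < d k) :
    l1norm3 (fun X Y Z W =>
        ∑ k ∈ Finset.range n, -sortedTetChain (a k) (b k) (c k) (d k) X Y Z W) ≤ n := by
  rw [l1norm3, finsum_eq_sum_of_fintype, div_le_iff₀ (by norm_num : (0:ℚ) < 24)]
  calc _ ≤ ∑ t : Fin v × Fin v × Fin v × Fin v, ∑ k ∈ Finset.range n,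
          (|sortedTetChain (a k) (b k) (c k) (d k) t.1 t.2.1 t.2.2.1 t.2.2.2| : ℚ) := by
        refine Finset.sum_le_sum fun t _ => ?_
        have h1 : |∑ k ∈ Finset.range n, -sortedTetChain (a k) (b k) (c k) (d k) t.1 t.2.1 t.2.2.1 t.2.2.2|
            ≤ ∑ k ∈ Finset.range n, |sortedTetChain (a k) (b k) (c k) (d k) t.1 t.2.1 t.2.2.1 t.2.2.2| := by
          refine le_trans (Finset.abs_sum_le_sum_abs _ _) (le_of_eq ?_)
          simp [abs_neg]
        exact_mod_cast h1
    _ = ∑ k ∈ Finset.range n, ∑ t : Fin v × Fin v × Fin v × Fin v,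
          (|sortedTetChain (a k) (b k) (c k) (d k) t.1 t.2.1 t.2.2.1 t.2.2.2| : ℚ) :=
        Finset.sum_comm
    _ ≤ ∑ _k ∈ Finset.range n, (24:ℚ) := by
        refine Finset.sum_le_sum fun k hk => ?_
        obtain ⟨h1, h2, h3⟩ := hord k (Finset.mem_range.1 hk)
        exact tet_l1 h1 h2 h3
    _ = n * 24 := by rw [Finset.sum_const, Finset.card_range]; push_cast; ring

theorem rho_swap {v : ℕ} (P : VolumePotential (Fin v)) (A B C : Fin v)
    (h1 : A ≠ B) (h2 : A ≠ C) (h3 : B ≠ C) : P.ρ B A C = -P.ρ A B C := by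
  rw [P.cyclic B A C h1.symm h3 h2]
  have := P.antisymm A B C h1 h2 h3
  linarith

theorem tri_sum {v : ℕ} (P : VolumePotential (Fin v)) {x y z : Fin v}
    (hxy : x < y) (hyz : y < z) :
    ∑ t : Fin v × Fin v × Fin v,
      (sortedTriChain {x, y, z} t.1 t.2.1 t.2.2 : ℚ) * P.ρ t.1 t.2.1 t.2.2
      = 6 * P.ρ x y z := by
  classical
  have hxz := hxy.trans hyz
  set S : Finset (Fin v × Fin v × Fin v) :=
    {(x,y,z), (x,z,y), (y,x,z), (y,z,x), (z,x,y), (z,y,x)} with hS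
  have hzero : ∀ t ∈ (Finset.univ : Finset (Fin v × Fin v × Fin v)), t ∉ S →
      (sortedTriChain {x, y, z} t.1 t.2.1 t.2.2 : ℚ) * P.ρ t.1 t.2.1 t.2.2 = 0 := by
    rintro ⟨X, Y, Z⟩ - hts
    have h0 : sortedTriChain ({x, y, z} : Finset (Fin v)) X Y Z = 0 := by
      rw [sortedTriChain, if_neg]
      rintro ⟨hset, hXY, hXZ, hYZ⟩
      apply hts
      rcases triple_cases hset hXY hXZ hYZ with
        ⟨rfl,rfl,rfl⟩|⟨rfl,rfl,rfl⟩|⟨rfl,rfl,rfl⟩|⟨rfl,rfl,rfl⟩|⟨rfl,rfl,rfl⟩|⟨rfl,rfl,rfl⟩ <;>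
        simp [hS]
    show (sortedTriChain ({x, y, z} : Finset (Fin v)) X Y Z : ℚ) * P.ρ X Y Z = 0
    rw [h0]
    norm_num
  rw [← Finset.sum_subset (Finset.subset_univ S) hzero]
  have r2 : ({x,z,y} : Finset (Fin v)) = {x,y,z} := by ext w; simp; try tauto
  have r3 : ({y,x,z} : Finset (Fin v)) = {x,y,z} := by ext w; simp; try tauto
  have r4 : ({y,z,x} : Finset (Fin v)) = {x,y,z} := by ext w; simp; try tauto
  have r5 : ({z,x,y} : Finset (Fin v)) = {x,y,z} := by ext w; simp; try tauto
  have r6 : ({z,y,x} : Finset (Fin v)) = {x,y,z} := by ext w; simp; try tauto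
  have e1 : sortedTriChain ({x,y,z} : Finset (Fin v)) x y z = 1 := by
    simp [sortedTriChain, hxy, hyz, hxz, hxy.ne, hxz.ne, hyz.ne]
  have e2 : sortedTriChain ({x,y,z} : Finset (Fin v)) x z y = -1 := by
    simp [sortedTriChain, r2, hxy, hyz, hxz, hxz.ne, hxy.ne, hyz.ne', hyz.asymm]
  have e3 : sortedTriChain ({x,y,z} : Finset (Fin v)) y x z = -1 := by
    simp [sortedTriChain, r3, hxy, hyz, hxz, hxy.ne', hxz.ne, hyz.ne, hxy.asymm]
  have e4 : sortedTriChain ({x,y,z} : Finset (Fin v)) y z x = 1 := by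
    simp [sortedTriChain, r4, hxy, hyz, hxz, hxy.ne', hxz.ne', hyz.ne, hxy.asymm, hxz.asymm]
  have e5 : sortedTriChain ({x,y,z} : Finset (Fin v)) z x y = 1 := by
    simp [sortedTriChain, r5, hxy, hyz, hxz, hxz.ne', hyz.ne', hxy.ne, hxz.asymm, hyz.asymm]
  have e6 : sortedTriChain ({x,y,z} : Finset (Fin v)) z y x = -1 := by
    simp [sortedTriChain, r6, hxy, hyz, hxz, hxz.ne', hyz.ne', hxy.ne', hxy.asymm, hxz.asymm,
      hyz.asymm]
  have cyc1 : P.ρ x y z = P.ρ y z x := P.cyclic x y z hxy.ne hxz.ne hyz.ne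
  have cyc2 : P.ρ y z x = P.ρ z x y := P.cyclic y z x hyz.ne hxy.ne' hxz.ne'
  have p2 : P.ρ x z y = -P.ρ x y z := by
    have := P.antisymm x y z hxy.ne hxz.ne hyz.ne
    linarith
  have p3 : P.ρ y x z = -P.ρ x y z := rho_swap P x y z hxy.ne hxz.ne hyz.ne
  have p6 : P.ρ z y x = -P.ρ x y z := by
    have := rho_swap P y z x hyz.ne hxy.ne' hxz.ne'
    linarith
  have n1 : ((x,y,z) : Fin v × Fin v × Fin v) ∉
      ({(x,z,y), (y,x,z), (y,z,x), (z,x,y), (z,y,x)} : Finset (Fin v × Fin v × Fin v)) := by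
    simp [Prod.ext_iff, hxy.ne, hxy.ne', hxz.ne, hxz.ne', hyz.ne, hyz.ne']
  have n2 : ((x,z,y) : Fin v × Fin v × Fin v) ∉
      ({(y,x,z), (y,z,x), (z,x,y), (z,y,x)} : Finset (Fin v × Fin v × Fin v)) := by
    simp [Prod.ext_iff, hxy.ne, hxy.ne', hxz.ne, hxz.ne', hyz.ne, hyz.ne']
  have n3 : ((y,x,z) : Fin v × Fin v × Fin v) ∉
      ({(y,z,x), (z,x,y), (z,y,x)} : Finset (Fin v × Fin v × Fin v)) := by
    simp [Prod.ext_iff, hxy.ne, hxy.ne', hxz.ne, hxz.ne', hyz.ne, hyz.ne']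
  have n4 : ((y,z,x) : Fin v × Fin v × Fin v) ∉
      ({(z,x,y), (z,y,x)} : Finset (Fin v × Fin v × Fin v)) := by
    simp [Prod.ext_iff, hxy.ne, hxy.ne', hxz.ne, hxz.ne', hyz.ne, hyz.ne']
  have n5 : ((z,x,y) : Fin v × Fin v × Fin v) ∉
      ({(z,y,x)} : Finset (Fin v × Fin v × Fin v)) := by
    simp [Prod.ext_iff, hxy.ne, hxy.ne', hxz.ne, hxz.ne', hyz.ne, hyz.ne']
  rw [hS, Finset.sum_insert n1, Finset.sum_insert n2, Finset.sum_insert n3,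
    Finset.sum_insert n4, Finset.sum_insert n5, Finset.sum_singleton]
  simp only [e1, e2, e3, e4, e5, e6, p2, p3, p6, cyc1, cyc2]
  push_cast
  ring

theorem part3 (v n : ℕ) (T : ℕ → Finset (Finset (Fin v))) (a b c d : ℕ → Fin v)
    (hT : ∀ k ≤ n, IsPolygonTriangulation v (T k))
    (hflip : ∀ k < n,
      a k < b k ∧ b k < c k ∧ c k < d k ∧
      ({a k, b k, c k} : Finset (Fin v)) ∈ T k ∧
      ({a k, c k, d k} : Finset (Fin v)) ∈ T k ∧
      T (k + 1) =
        (T k \ {({a k, b k, c k} : Finset (Fin v)), {a k, c k, d k}}) ∪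
          {({a k, b k, d k} : Finset (Fin v)), {b k, c k, d k}})
    (P : VolumePotential (Fin v)) (hGood : P.Good) :
    P.eval2 (polyChain (T 0)) - P.eval2 (polyChain (T n)) ≤ (n : ℚ) := by
  have key : ∀ k < n, P.eval2 (polyChain (T k)) - P.eval2 (polyChain (T (k + 1))) ≤ 1 := by
    intro k hk
    obtain ⟨h1, h2, h3, h4, h5, h6⟩ := hflip k hk
    have hac := h1.trans h2
    have hbd := h2.trans h3
    have had := h1.trans hbd
    rw [VolumePotential.eval2, VolumePotential.eval2, finsum_eq_sum_of_fintype,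
      finsum_eq_sum_of_fintype, div_sub_div_same, div_le_one (by norm_num : (0:ℚ) < 6),
      ← Finset.sum_sub_distrib]
    have hpt : ∀ t : Fin v × Fin v × Fin v,
        (polyChain (T k) t.1 t.2.1 t.2.2 : ℚ) * P.ρ t.1 t.2.1 t.2.2
          - (polyChain (T (k + 1)) t.1 t.2.1 t.2.2 : ℚ) * P.ρ t.1 t.2.1 t.2.2
        = ((sortedTriChain {a k, b k, c k} t.1 t.2.1 t.2.2 : ℚ) * P.ρ t.1 t.2.1 t.2.2
            + (sortedTriChain {a k, c k, d k} t.1 t.2.1 t.2.2 : ℚ) * P.ρ t.1 t.2.1 t.2.2)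
          - ((sortedTriChain {a k, b k, d k} t.1 t.2.1 t.2.2 : ℚ) * P.ρ t.1 t.2.1 t.2.2
            + (sortedTriChain {b k, c k, d k} t.1 t.2.1 t.2.2 : ℚ) * P.ρ t.1 t.2.1 t.2.2) := by
      intro t
      have h7 := flip_chain (hT k hk.le) h1 h2 h3 h4 h5 h6 t.1 t.2.1 t.2.2
      have h8 : ((polyChain (T k) t.1 t.2.1 t.2.2 : ℤ) : ℚ)
            - (polyChain (T (k + 1)) t.1 t.2.1 t.2.2 : ℚ)
          = ((sortedTriChain {a k, b k, c k} t.1 t.2.1 t.2.2 : ℤ) : ℚ)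
            + (sortedTriChain {a k, c k, d k} t.1 t.2.1 t.2.2 : ℚ)
            - (sortedTriChain {a k, b k, d k} t.1 t.2.1 t.2.2 : ℚ)
            - (sortedTriChain {b k, c k, d k} t.1 t.2.1 t.2.2 : ℚ) := by
        exact_mod_cast (by linarith :
          (polyChain (T k) t.1 t.2.1 t.2.2 : ℤ) - polyChain (T (k + 1)) t.1 t.2.1 t.2.2
            = sortedTriChain {a k, b k, c k} t.1 t.2.1 t.2.2
              + sortedTriChain {a k, c k, d k} t.1 t.2.1 t.2.2
              - sortedTriChain {a k, b k, d k} t.1 t.2.1 t.2.2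
              - sortedTriChain {b k, c k, d k} t.1 t.2.1 t.2.2)
      rw [← sub_mul, h8]
      ring
    rw [Finset.sum_congr rfl (fun t _ => hpt t), Finset.sum_sub_distrib,
      Finset.sum_add_distrib, Finset.sum_add_distrib,
      tri_sum P h1 h2, tri_sum P hac h3, tri_sum P h1 hbd, tri_sum P h2 h3]
    have hvol := hGood (b k) (a k) (c k) (d k) h1.ne' h2.ne hbd.ne hac.ne had.ne h3.ne
    rw [VolumePotential.vol] at hvol
    have s1 : P.ρ (b k) (a k) (d k) = -P.ρ (a k) (b k) (d k) :=
      rho_swap P (a k) (b k) (d k) h1.ne had.ne hbd.ne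
    have s2 : P.ρ (b k) (a k) (c k) = -P.ρ (a k) (b k) (c k) :=
      rho_swap P (a k) (b k) (c k) h1.ne hac.ne h2.ne
    linarith
  have tele : P.eval2 (polyChain (T 0)) - P.eval2 (polyChain (T n))
      = ∑ k ∈ Finset.range n, (P.eval2 (polyChain (T k)) - P.eval2 (polyChain (T (k + 1)))) :=
    (Finset.sum_range_sub' (fun k => P.eval2 (polyChain (T k))) n).symm
  rw [tele]
  calc _ ≤ ∑ _k ∈ Finset.range n, (1:ℚ) :=
        Finset.sum_le_sum fun k hk => key k (Finset.mem_range.1 hk)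
    _ = n := by simp


/-- Flip paths beget tetrations.  Let `T 0, T 1, …, T n` be
triangulations of the convex `v`-gon such that each `T (k+1)` is obtained from
`T k` by a flip, the `k`-th flip replacing the triangles `{a k, b k, c k}` and
`{a k, c k, d k}` (with `a k < b k < c k < d k`) by `{a k, b k, d k}` and
`{b k, c k, d k}`.  Then the 3-chain `τ := Σ_{k<n} (−[a k, b k, c k, d k])`
satisfies `∂τ = σ_{T 0} − σ_{T n}` and `‖τ‖₁ ≤ n`.  Consequently, for every good
volume potential `ρ` on `{0, …, v−1}`, `n ≥ ρ(σ_{T 0}) − ρ(σ_{T n})`. -/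
theorem flip_paths_beget_tetrations (v n : ℕ)
    (T : ℕ → Finset (Finset (Fin v))) (a b c d : ℕ → Fin v)
    (hT : ∀ k ≤ n, IsPolygonTriangulation v (T k))
    (hflip : ∀ k < n,
      a k < b k ∧ b k < c k ∧ c k < d k ∧
      ({a k, b k, c k} : Finset (Fin v)) ∈ T k ∧
      ({a k, c k, d k} : Finset (Fin v)) ∈ T k ∧
      T (k + 1) =
        (T k \ {({a k, b k, c k} : Finset (Fin v)), {a k, c k, d k}}) ∪
          {({a k, b k, d k} : Finset (Fin v)), {b k, c k, d k}}) :
    (bdry3 (fun X Y Z W =>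
        ∑ k ∈ Finset.range n, -sortedTetChain (a k) (b k) (c k) (d k) X Y Z W) =
      fun X Y Z => polyChain (T 0) X Y Z - polyChain (T n) X Y Z) ∧
    l1norm3 (fun X Y Z W =>
        ∑ k ∈ Finset.range n, -sortedTetChain (a k) (b k) (c k) (d k) X Y Z W) ≤ n ∧
    (∀ P : VolumePotential (Fin v), P.Good →
      P.eval2 (polyChain (T 0)) - P.eval2 (polyChain (T n)) ≤ (n : ℚ)) := by
  refine ⟨part1 v n T a b c d hT hflip, ?_, fun P hP => part3 v n T a b c d hT hflip P hP⟩
  exact part2 v n a b c d fun k hk =>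
    ⟨(hflip k hk).1, (hflip k hk).2.1, (hflip k hk).2.2.1⟩
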